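/- Let a₁, …, aₙ be a probability vector, let 1 ≤ k < n, let 0 < p < 1, and set q = Σ_{j=1}^{k} aⱼ. Assume 0 < q < 1. Let N⁻¹ = p·q + (1−p)·(1−q) and M⁻¹ = p·(1−q) + (1−p)·q, and let b⁰ and b¹ be the Bayes updates of a at k with parameter p. Then N⁻¹·H(b⁰) + M⁻¹·H(b¹) = H(a) + H₂(p) − H₂(p·q + (1−p)·(1−q)); that is, the expected entropy decrease N⁻¹·(H(a) − H(b⁰)) + M⁻¹·(H(a) − H(b¹)) equals H₂(p·q + (1−p)·(1−q)) − H₂(p). -/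

import Mathlib

/-- Shannon entropy (base 2) of a vector `a` indexed by `0, …, n-1`:
`H(a) = −Σᵢ aᵢ·log₂(aᵢ)`, with the convention `0·log₂(0) = 0`. -/
noncomputable def shannonEntropy (n : ℕ) (a : ℕ → ℝ) : ℝ :=
  ∑ i ∈ Finset.range n, -(a i * Real.logb 2 (a i))

/-- Binary entropy `H₂(x) = −x·log₂(x) − (1−x)·log₂(1−x)`,
with the convention `0·log₂(0) = 0`. -/
noncomputable def binEntropy (x : ℝ) : ℝ :=
  -x * Real.logb 2 x - (1 - x) * Real.logb 2 (1 - x)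

private lemma ent_mul (c x : ℝ) (hc : 0 < c) (hx : 0 ≤ x) :
    -(c * x * Real.logb 2 (c * x)) = -(c * x) * Real.logb 2 c + c * -(x * Real.logb 2 x) := by
  rcases hx.eq_or_lt with h | h
  · simp [← h]
  · rw [Real.logb_mul hc.ne' h.ne']; ring

/-- Let `a` be a probability vector on `{1,…,n}` (indexed here by
`0, …, n-1`), `1 ≤ k < n`, `0 < p < 1`, `q = Σ_{j=1}^{k} aⱼ` with `0 < q < 1`.
Let `N⁻¹ = p·q + (1−p)·(1−q)` and `M⁻¹ = p·(1−q) + (1−p)·q`, and let `b⁰, b¹` be the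
Bayes updates of `a` at `k` with parameter `p`. Then
`N⁻¹·H(b⁰) + M⁻¹·H(b¹) = H(a) + H₂(p) − H₂(N⁻¹)`; equivalently the expected entropy
decrease `N⁻¹·(H(a) − H(b⁰)) + M⁻¹·(H(a) − H(b¹))` equals `H₂(N⁻¹) − H₂(p)`. -/
theorem bayes_update_expected_entropy (n k : ℕ) (a : ℕ → ℝ) (p : ℝ)
    (hk1 : 1 ≤ k) (hkn : k < n)
    (ha0 : ∀ i ∈ Finset.range n, 0 ≤ a i)
    (ha1 : ∑ i ∈ Finset.range n, a i = 1)
    (hp0 : 0 < p) (hp1 : p < 1)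
    (q : ℝ) (hq : q = ∑ j ∈ Finset.range k, a j)
    (hq0 : 0 < q) (hq1 : q < 1)
    (Ninv Minv : ℝ)
    (hN : Ninv = p * q + (1 - p) * (1 - q))
    (hM : Minv = p * (1 - q) + (1 - p) * q)
    (b0 b1 : ℕ → ℝ)
    (hb0 : ∀ j, b0 j = if j < k then p * a j / Ninv else (1 - p) * a j / Ninv)
    (hb1 : ∀ j, b1 j = if j < k then (1 - p) * a j / Minv else p * a j / Minv) :
    Ninv * shannonEntropy n b0 + Minv * shannonEntropy n b1
      = shannonEntropy n a + binEntropy p - binEntropy (p * q + (1 - p) * (1 - q)) ∧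
    Ninv * (shannonEntropy n a - shannonEntropy n b0)
      + Minv * (shannonEntropy n a - shannonEntropy n b1)
      = binEntropy (p * q + (1 - p) * (1 - q)) - binEntropy p := by
  have hp1' : (0:ℝ) < 1 - p := by linarith
  have hNpos : 0 < Ninv := by rw [hN]; nlinarith
  have hMpos : 0 < Minv := by rw [hM]; nlinarith
  have hkn' : k ≤ n := hkn.le
  have hsplit : ∀ f : ℕ → ℝ, ∑ j ∈ Finset.range n, f j
      = ∑ j ∈ Finset.range k, f j + ∑ j ∈ Finset.Ico k n, f j := by
    intro f
    rw [Finset.range_eq_Ico, Finset.range_eq_Ico]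
    exact (Finset.sum_Ico_consecutive f (Nat.zero_le k) hkn').symm
  have hIco : ∑ j ∈ Finset.Ico k n, a j = 1 - q := by
    have h := hsplit a
    rw [ha1, ← hq] at h
    linarith
  set c1 : ℝ := -(p * Real.logb 2 (p / Ninv)) - (1 - p) * Real.logb 2 ((1 - p) / Minv) with hc1
  set c2 : ℝ := -((1 - p) * Real.logb 2 ((1 - p) / Ninv)) - p * Real.logb 2 (p / Minv) with hc2
  have key : ∀ j ∈ Finset.range n,
      Ninv * -(b0 j * Real.logb 2 (b0 j)) + Minv * -(b1 j * Real.logb 2 (b1 j))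
        = -(a j * Real.logb 2 (a j)) + (if j < k then c1 * a j else c2 * a j) := by
    intro j hj
    have haj := ha0 j hj
    rw [hb0 j, hb1 j]
    by_cases hjk : j < k
    · simp only [if_pos hjk]
      have e0 : p * a j / Ninv = (p / Ninv) * a j := by ring
      have e1 : (1 - p) * a j / Minv = ((1 - p) / Minv) * a j := by ring
      rw [e0, e1, ent_mul _ _ (div_pos hp0 hNpos) haj,
        ent_mul _ _ (div_pos hp1' hMpos) haj, hc1]
      field_simp
      ring
    · simp only [if_neg hjk]
      have e0 : (1 - p) * a j / Ninv = ((1 - p) / Ninv) * a j := by ring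
      have e1 : p * a j / Minv = (p / Minv) * a j := by ring
      rw [e0, e1, ent_mul _ _ (div_pos hp1' hNpos) haj,
        ent_mul _ _ (div_pos hp0 hMpos) haj, hc2]
      field_simp
      ring
  have main : Ninv * shannonEntropy n b0 + Minv * shannonEntropy n b1
      = shannonEntropy n a + (c1 * q + c2 * (1 - q)) := by
    unfold shannonEntropy
    rw [Finset.mul_sum, Finset.mul_sum, ← Finset.sum_add_distrib,
      Finset.sum_congr rfl key, Finset.sum_add_distrib]
    congr 1
    rw [hsplit (fun j => if j < k then c1 * a j else c2 * a j)]
    congr 1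
    · rw [Finset.sum_congr rfl (fun j hj => if_pos (Finset.mem_range.mp hj)),
        ← Finset.mul_sum, hq]
    · rw [Finset.sum_congr rfl
        (fun j hj => if_neg (by have := (Finset.mem_Ico.mp hj).1; omega)),
        ← Finset.mul_sum, hIco]
  have h1mN : 1 - (p * q + (1 - p) * (1 - q)) = Minv := by rw [hM]; ring
  have hcorr : c1 * q + c2 * (1 - q)
      = binEntropy p - binEntropy (p * q + (1 - p) * (1 - q)) := by
    rw [hc1, hc2, binEntropy, binEntropy, h1mN,
      Real.logb_div hp0.ne' hNpos.ne',
      Real.logb_div hp1'.ne' hMpos.ne',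
      Real.logb_div hp1'.ne' hNpos.ne',
      Real.logb_div hp0.ne' hMpos.ne', ← hN]
    linear_combination (-Real.logb 2 Ninv) * hN + (-Real.logb 2 Minv) * hM
  have first : Ninv * shannonEntropy n b0 + Minv * shannonEntropy n b1
      = shannonEntropy n a + binEntropy p - binEntropy (p * q + (1 - p) * (1 - q)) := by
    rw [main, hcorr]; ring
  have hNM : Ninv + Minv = 1 := by rw [hN, hM]; ring
  refine ⟨first, ?_⟩
  linear_combination (-1 : ℝ) * first + shannonEntropy n a * hNM
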